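/- Assume equal weights α_1 = … = α_A and let x* = (1/A, …, 1/A) be the uniform point of the simplex. Then for every β ∈ ℝ, every r ∈ [0,1] and all indices i ≠ j, the drift field G (extended to the positive orthant) satisfies ∂G_i/∂x_i(x*) − ∂G_i/∂x_j(x*) = (1−r)β − 1; this quantity is negative if and only if r > (β−1)/β when β > 0, which is the stability criterion for the uniform fixed point. -/
import Mathlib


open scoped BigOperators

/-- `p_i(x) = α_i x_i^β / (∑_j α_j x_j^β)` (real powers). -/
noncomputable def pF (A : ℕ) (α : Fin A → ℝ) (β : ℝ) (x : Fin A → ℝ) (i : Fin A) : ℝ :=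
  α i * x i ^ β / ∑ j, α j * x j ^ β

/-- The drift field `G(x) = (1-r) p(x) + r γ - x` on the positive orthant. -/
noncomputable def GF (A : ℕ) (α : Fin A → ℝ) (β r : ℝ) (γ : Fin A → ℝ)
    (x : Fin A → ℝ) (i : Fin A) : ℝ :=
  (1 - r) * pF A α β x i + r * γ i - x i

/-- with equal weights and the uniform point `x* = (1/A,…,1/A)`, for
every `β ∈ ℝ`, `r ∈ [0,1]` and `i ≠ j`, the partial derivatives of the drift field
satisfy `∂G_i/∂x_i(x*) - ∂G_i/∂x_j(x*) = (1-r)β - 1`; for `β > 0` this quantity is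
negative iff `r > (β-1)/β` (the stability criterion for the uniform fixed point). -/
theorem uniform_fixed_point_stability_criterion
    (A : ℕ) (hA : 2 ≤ A) (a : ℝ) (ha : 0 < a) (α : Fin A → ℝ) (hα : ∀ i, α i = a)
    (β : ℝ) (r : ℝ) (hr : r ∈ Set.Icc (0 : ℝ) 1)
    (γ : Fin A → ℝ) (hγ0 : ∀ i, 0 ≤ γ i) (hγ1 : ∑ i, γ i = 1)
    (xstar : Fin A → ℝ) (hxstar : ∀ i, xstar i = 1 / A)
    (i j : Fin A) (hij : i ≠ j) :
    ∃ d₁ d₂ : ℝ,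
      HasDerivAt (fun t : ℝ => GF A α β r γ (Function.update xstar i t) i) d₁ (xstar i) ∧
      HasDerivAt (fun t : ℝ => GF A α β r γ (Function.update xstar j t) i) d₂ (xstar j) ∧
      d₁ - d₂ = (1 - r) * β - 1 ∧
      (0 < β → (d₁ - d₂ < 0 ↔ (β - 1) / β < r)) := by
  obtain ⟨hr0, hr1⟩ := hr
  have hA0 : (0:ℝ) < A := by
    have : 0 < A := by omega
    exact_mod_cast this
  set t₀ : ℝ := 1 / A with ht₀def
  have ht₀ : 0 < t₀ := by positivity
  set c : ℝ := t₀ ^ β with hcdef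
  have hc : 0 < c := Real.rpow_pos_of_pos ht₀ β
  have hc' : t₀ ^ (β - 1) = c * A := by
    rw [Real.rpow_sub ht₀, Real.rpow_one, hcdef, ht₀def]
    field_simp
  have hsum : ∀ (m : Fin A) (t : ℝ),
      ∑ k, α k * (Function.update xstar m t k) ^ β = a * t ^ β + ((A:ℝ) - 1) * (a * c) := by
    intro m t
    rw [← Finset.add_sum_erase _ _ (Finset.mem_univ m), Function.update_self, hα]
    have h1 : ∀ k ∈ Finset.univ.erase m,
        α k * (Function.update xstar m t k) ^ β = a * c := by
      intro k hk
      rw [Function.update_of_ne (Finset.ne_of_mem_erase hk), hα, hxstar, hcdef, ht₀def]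
    rw [Finset.sum_congr rfl h1, Finset.sum_const,
      Finset.card_erase_of_mem (Finset.mem_univ m), Finset.card_univ, Fintype.card_fin,
      nsmul_eq_mul, Nat.cast_sub (by omega : 1 ≤ A), Nat.cast_one]
  -- derivative of rpow at t₀
  have hrpow : HasDerivAt (fun t : ℝ => t ^ β) (β * t₀ ^ (β - 1)) t₀ :=
    Real.hasDerivAt_rpow_const (Or.inl ht₀.ne')
  set D : ℝ := a * c + ((A:ℝ) - 1) * (a * c) with hDdef
  have hD : 0 < D := by
    have : D = (A:ℝ) * (a * c) := by rw [hDdef]; ring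
    rw [this]; positivity
  have hdenom : HasDerivAt (fun t : ℝ => a * t ^ β + ((A:ℝ) - 1) * (a * c))
      (a * (β * t₀ ^ (β - 1))) t₀ := (hrpow.const_mul a).add_const _
  have hdenom_val : a * t₀ ^ β + ((A:ℝ) - 1) * (a * c) = D := by rw [hDdef, hcdef]
  have hdenom_ne : a * t₀ ^ β + ((A:ℝ) - 1) * (a * c) ≠ 0 := by
    rw [hdenom_val]; exact hD.ne'
  -- case 1 : derivative in coordinate i
  have hq1 : HasDerivAt
      (fun t : ℝ => a * t ^ β / (a * t ^ β + ((A:ℝ) - 1) * (a * c)))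
      ((a * (β * t₀ ^ (β - 1)) * (a * t₀ ^ β + ((A:ℝ) - 1) * (a * c))
        - a * t₀ ^ β * (a * (β * t₀ ^ (β - 1))))
        / (a * t₀ ^ β + ((A:ℝ) - 1) * (a * c)) ^ 2) t₀ :=
    (hrpow.const_mul a).div hdenom hdenom_ne
  have hf1 : HasDerivAt
      (fun t : ℝ => (1 - r) * (a * t ^ β / (a * t ^ β + ((A:ℝ) - 1) * (a * c))) + r * γ i - t)
      ((1 - r) * ((a * (β * t₀ ^ (β - 1)) * (a * t₀ ^ β + ((A:ℝ) - 1) * (a * c))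
        - a * t₀ ^ β * (a * (β * t₀ ^ (β - 1))))
        / (a * t₀ ^ β + ((A:ℝ) - 1) * (a * c)) ^ 2) - 1) t₀ :=
    ((hq1.const_mul (1 - r)).add_const (r * γ i)).sub (hasDerivAt_id t₀)
  -- case 2 : derivative in coordinate j
  have hq2 : HasDerivAt
      (fun t : ℝ => a * c / (a * t ^ β + ((A:ℝ) - 1) * (a * c)))
      ((0 * (a * t₀ ^ β + ((A:ℝ) - 1) * (a * c))
        - a * c * (a * (β * t₀ ^ (β - 1))))
        / (a * t₀ ^ β + ((A:ℝ) - 1) * (a * c)) ^ 2) t₀ :=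
    (hasDerivAt_const t₀ (a * c)).div hdenom hdenom_ne
  have hf2 : HasDerivAt
      (fun t : ℝ => (1 - r) * (a * c / (a * t ^ β + ((A:ℝ) - 1) * (a * c))) + (r * γ i - t₀))
      ((1 - r) * ((0 * (a * t₀ ^ β + ((A:ℝ) - 1) * (a * c))
        - a * c * (a * (β * t₀ ^ (β - 1))))
        / (a * t₀ ^ β + ((A:ℝ) - 1) * (a * c)) ^ 2)) t₀ :=
    (hq2.const_mul (1 - r)).add_const (r * γ i - t₀)
  -- rewrite the target functions
  have hfun1 : (fun t : ℝ => GF A α β r γ (Function.update xstar i t) i)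
      = fun t : ℝ => (1 - r) * (a * t ^ β / (a * t ^ β + ((A:ℝ) - 1) * (a * c))) + r * γ i - t := by
    funext t
    simp only [GF, pF, Function.update_self]
    rw [hsum i t, hα]
  have hfun2 : (fun t : ℝ => GF A α β r γ (Function.update xstar j t) i)
      = fun t : ℝ => (1 - r) * (a * c / (a * t ^ β + ((A:ℝ) - 1) * (a * c))) + (r * γ i - t₀) := by
    funext t
    simp only [GF, pF, Function.update_of_ne hij]
    rw [hsum j t, hα, hxstar, ← hcdef]
    ring
  refine ⟨(1 - r) * ((a * (β * t₀ ^ (β - 1)) * (a * t₀ ^ β + ((A:ℝ) - 1) * (a * c))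
        - a * t₀ ^ β * (a * (β * t₀ ^ (β - 1))))
        / (a * t₀ ^ β + ((A:ℝ) - 1) * (a * c)) ^ 2) - 1,
      (1 - r) * ((0 * (a * t₀ ^ β + ((A:ℝ) - 1) * (a * c))
        - a * c * (a * (β * t₀ ^ (β - 1))))
        / (a * t₀ ^ β + ((A:ℝ) - 1) * (a * c)) ^ 2), ?_, ?_, ?_, ?_⟩
  · rw [hfun1, hxstar i]; exact hf1
  · rw [hfun2, hxstar j]; exact hf2
  · rw [hc', hdenom_val]
    have hDv : D = (A:ℝ) * (a * c) := by rw [hDdef]; ring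
    rw [hDv]
    field_simp
    ring
  · intro hβ
    have heq : (1 - r) * ((a * (β * t₀ ^ (β - 1)) * (a * t₀ ^ β + ((A:ℝ) - 1) * (a * c))
        - a * t₀ ^ β * (a * (β * t₀ ^ (β - 1))))
        / (a * t₀ ^ β + ((A:ℝ) - 1) * (a * c)) ^ 2) - 1
        - (1 - r) * ((0 * (a * t₀ ^ β + ((A:ℝ) - 1) * (a * c))
        - a * c * (a * (β * t₀ ^ (β - 1))))
        / (a * t₀ ^ β + ((A:ℝ) - 1) * (a * c)) ^ 2) = (1 - r) * β - 1 := by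
      rw [hc', hdenom_val]
      have hDv : D = (A:ℝ) * (a * c) := by rw [hDdef]; ring
      rw [hDv]
      field_simp
      ring
    rw [heq, div_lt_iff₀ hβ]
    constructor <;> intro h <;> nlinarith
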